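/- arXiv:math-ph/0102009 — 2 statements merged into one kernel-verified Lean document; each statement's English description precedes it below -/
import Mathlib

section
/- (Fatness lemma) Let S be a connected subset of Z^2 such that (R^+)^{2i}(S) ≠ ∅. Then (R^+)^i(S) has at least i^2/2 elements. -/
open Set

abbrev Pt := ℤ × ℤ

/-- Adjacency in the graph `G`: neighbor increments
`(0,1), (0,-1), (1,0), (-1,0), (-1,1), (1,-1)`. -/
def adjG (p q : Pt) : Prop :=
  q - p ∈ ({(0,1), (0,-1), (1,0), (-1,0), (-1,1), (1,-1)} : Set Pt)

/-- Reachability within a set `S` along edges of `G`. -/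
def ReachIn (S : Set Pt) (p q : Pt) : Prop :=
  Relation.ReflTransGen (fun a b => a ∈ S ∧ b ∈ S ∧ adjG a b) p q

/-- `S` is connected in the graph `G`. -/
def ConnectedIn (S : Set Pt) : Prop :=
  ∀ p ∈ S, ∀ q ∈ S, ReachIn S p q

/-- The tile with center `p`. -/
def tile (p : Pt) : Set Pt := {p, p + (1, 0), p + (0, 1)}

/-- Inflation operation `Q`. -/
def QOp (S : Set Pt) : Set Pt := ⋃ a ∈ S, tile a

/-- Toom's rule `R`: majority of self, north, east. -/
def ROp (S : Set Pt) : Set Pt := {p | 2 ≤ (S ∩ tile p).ncard}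

/-- The biased Toom rule `R⁺ = Q ∘ R ∘ R`. -/
def RPlus (S : Set Pt) : Set Pt := QOp (ROp (ROp S))

/- ### Basic facts -/

lemma tile_finite (p : Pt) : (tile p).Finite := by
  unfold tile
  exact (Set.finite_singleton _).insert _ |>.insert _

lemma mem_tile_iff {x p : Pt} : x ∈ tile p ↔
    (x.1 = p.1 ∧ x.2 = p.2) ∨ (x.1 = p.1 + 1 ∧ x.2 = p.2) ∨ (x.1 = p.1 ∧ x.2 = p.2 + 1) := by
  simp [tile, Prod.ext_iff]

lemma mem_QOp_iff {x : Pt} {S : Set Pt} : x ∈ QOp S ↔ ∃ a ∈ S, x ∈ tile a := by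
  simp [QOp]

lemma mem_ROp_pair {S : Set Pt} {a b p : Pt} (ha : a ∈ S) (hb : b ∈ S)
    (hne : a ≠ b) (hta : a ∈ tile p) (htb : b ∈ tile p) : p ∈ ROp S := by
  have hfin : (S ∩ tile p).Finite := Set.Finite.inter_of_right (tile_finite p) S
  have hsub : ({a, b} : Set Pt) ⊆ S ∩ tile p := by
    rintro x (rfl | rfl)
    · exact ⟨ha, hta⟩
    · exact ⟨hb, htb⟩
  have hc := Set.ncard_le_ncard hsub hfin
  rw [Set.ncard_pair hne] at hc
  exact hc

lemma ROp_mem_pair {S : Set Pt} {p : Pt} (hp : p ∈ ROp S) :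
    ∃ a ∈ S ∩ tile p, ∃ b ∈ S ∩ tile p, a ≠ b := by
  have hfin : (S ∩ tile p).Finite := Set.Finite.inter_of_right (tile_finite p) S
  exact (Set.one_lt_ncard hfin).mp hp

lemma adjG_iff {a b : Pt} : adjG a b ↔
    (b.1 - a.1 = 0 ∧ b.2 - a.2 = 1) ∨ (b.1 - a.1 = 0 ∧ b.2 - a.2 = -1) ∨
    (b.1 - a.1 = 1 ∧ b.2 - a.2 = 0) ∨ (b.1 - a.1 = -1 ∧ b.2 - a.2 = 0) ∨
    (b.1 - a.1 = -1 ∧ b.2 - a.2 = 1) ∨ (b.1 - a.1 = 1 ∧ b.2 - a.2 = -1) := by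
  simp [adjG, Prod.ext_iff]

lemma edge_witness {S : Set Pt} {a b : Pt} (ha : a ∈ S) (hb : b ∈ S) (hadj : adjG a b) :
    ∃ p ∈ ROp S, a ∈ tile p ∧ b ∈ tile p := by
  have hne : a ≠ b := by
    rw [adjG_iff] at hadj
    intro h; rw [h] at hadj; omega
  rw [adjG_iff] at hadj
  rcases hadj with h | h | h | h | h | h
  · exact ⟨a, mem_ROp_pair ha hb hne (by rw [mem_tile_iff]; omega) (by rw [mem_tile_iff]; omega),
      by rw [mem_tile_iff]; omega, by rw [mem_tile_iff]; omega⟩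
  · exact ⟨b, mem_ROp_pair ha hb hne (by rw [mem_tile_iff]; omega) (by rw [mem_tile_iff]; omega),
      by rw [mem_tile_iff]; omega, by rw [mem_tile_iff]; omega⟩
  · exact ⟨a, mem_ROp_pair ha hb hne (by rw [mem_tile_iff]; omega) (by rw [mem_tile_iff]; omega),
      by rw [mem_tile_iff]; omega, by rw [mem_tile_iff]; omega⟩
  · exact ⟨b, mem_ROp_pair ha hb hne (by rw [mem_tile_iff]; omega) (by rw [mem_tile_iff]; omega),
      by rw [mem_tile_iff]; omega, by rw [mem_tile_iff]; omega⟩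
  · exact ⟨(a.1 - 1, a.2), mem_ROp_pair ha hb hne (by rw [mem_tile_iff]; simp; try omega)
      (by rw [mem_tile_iff]; simp; try omega),
      by rw [mem_tile_iff]; simp; try omega, by rw [mem_tile_iff]; simp; try omega⟩
  · exact ⟨(a.1, a.2 - 1), mem_ROp_pair ha hb hne (by rw [mem_tile_iff]; simp; try omega)
      (by rw [mem_tile_iff]; simp; try omega),
      by rw [mem_tile_iff]; simp; try omega, by rw [mem_tile_iff]; simp; try omega⟩
/- ### R preserves connectedness -/

lemma reach_of_common {S : Set Pt} {p q x : Pt} (hp : p ∈ ROp S) (hq : q ∈ ROp S)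
    (hxp : x ∈ tile p) (hxq : x ∈ tile q) : ReachIn (ROp S) p q := by
  rcases eq_or_ne p q with rfl | hne
  · exact Relation.ReflTransGen.refl
  · refine Relation.ReflTransGen.single ⟨hp, hq, ?_⟩
    rw [mem_tile_iff] at hxp hxq
    rw [adjG_iff]
    rw [Ne, Prod.ext_iff] at hne
    omega

lemma lift_reach {S : Set Pt} {a b : Pt} (h : ReachIn S a b) :
    ∀ p ∈ ROp S, a ∈ tile p → ∀ q ∈ ROp S, b ∈ tile q → ReachIn (ROp S) p q := by
  have h' : Relation.ReflTransGen (fun x y => x ∈ S ∧ y ∈ S ∧ adjG x y) a b := h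
  clear h
  induction h' using Relation.ReflTransGen.head_induction_on with
  | refl => exact fun p hp hap q hq hbq => reach_of_common hp hq hap hbq
  | head hstep _ ih =>
      intro p hp hap q hq hbq
      obtain ⟨haS, hcS, hadj⟩ := hstep
      obtain ⟨r, hr, har, hcr⟩ := edge_witness haS hcS hadj
      exact (reach_of_common hp hr hap har).trans (ih r hr hcr q hq hbq)

lemma ROp_connected {S : Set Pt} (hS : ConnectedIn S) : ConnectedIn (ROp S) := by
  intro p hp q hq
  obtain ⟨a, ⟨haS, hat⟩, -, -, -⟩ := ROp_mem_pair hp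
  obtain ⟨b, ⟨hbS, hbt⟩, -, -, -⟩ := ROp_mem_pair hq
  exact lift_reach (hS a haS b hbS) p hp hat q hq hbt

lemma has_nbr {S : Set Pt} (hS : ConnectedIn S) {s s' : Pt} (hs : s ∈ S) (hs' : s' ∈ S)
    (hne : s ≠ s') : ∃ t ∈ S, adjG s t := by
  rcases Relation.ReflTransGen.cases_head (hS s hs s' hs') with h | ⟨c, ⟨-, hc, hadj⟩, -⟩
  · exact absurd h hne
  · exact ⟨c, hc, hadj⟩

lemma subset_QR {S : Set Pt} (hS : ConnectedIn S)
    (hnt : ∃ x ∈ S, ∃ y ∈ S, x ≠ y) : S ⊆ QOp (ROp S) := by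
  intro s hs
  obtain ⟨x, hx, y, hy, hxy⟩ := hnt
  have hex : ∃ t ∈ S, adjG s t := by
    rcases eq_or_ne s x with rfl | hne
    · exact has_nbr hS hs hy hxy
    · exact has_nbr hS hs hx hne
  obtain ⟨t, ht, hadj⟩ := hex
  obtain ⟨p, hp, hsp, -⟩ := edge_witness hs ht hadj
  exact mem_QOp_iff.mpr ⟨p, hp, hsp⟩
/- ### Span witnesses -/

lemma ROp_span {S : Set Pt} {p : Pt} (hp : p ∈ ROp S) :
    (∃ a ∈ S, p.1 + p.2 + 1 ≤ a.1 + a.2) ∧ (∃ b ∈ S, b.1 ≤ p.1) ∧ (∃ c ∈ S, c.2 ≤ p.2) := by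
  obtain ⟨a, ⟨haS, hat⟩, b, ⟨hbS, hbt⟩, hab⟩ := ROp_mem_pair hp
  rw [mem_tile_iff] at hat hbt
  rw [Ne, Prod.ext_iff] at hab
  refine ⟨?_, ?_, ?_⟩
  · rcases hat with h | h | h
    · exact ⟨b, hbS, by omega⟩
    · exact ⟨a, haS, by omega⟩
    · exact ⟨a, haS, by omega⟩
  · rcases hat with h | h | h
    · exact ⟨a, haS, by omega⟩
    · exact ⟨b, hbS, by omega⟩
    · exact ⟨a, haS, by omega⟩
  · rcases hat with h | h | h
    · exact ⟨a, haS, by omega⟩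
    · exact ⟨a, haS, by omega⟩
    · exact ⟨b, hbS, by omega⟩

lemma ROp_iter_span : ∀ (k : ℕ) {S : Set Pt} {p : Pt}, p ∈ ROp^[k] S →
    (∃ a ∈ S, p.1 + p.2 + (k : ℤ) ≤ a.1 + a.2) ∧ (∃ b ∈ S, b.1 ≤ p.1) ∧
      (∃ c ∈ S, c.2 ≤ p.2) := by
  intro k
  induction k with
  | zero => exact fun hp => ⟨⟨_, hp, by omega⟩, ⟨_, hp, le_refl _⟩, ⟨_, hp, le_refl _⟩⟩
  | succ k ih =>
      intro S p hp
      rw [Function.iterate_succ_apply'] at hp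
      obtain ⟨⟨a, ha, hfa⟩, ⟨b, hb, hxb⟩, ⟨c, hc, hyc⟩⟩ := ROp_span hp
      obtain ⟨⟨a', ha', hfa'⟩, -, -⟩ := ih ha
      obtain ⟨-, ⟨b', hb', hxb'⟩, -⟩ := ih hb
      obtain ⟨-, -, ⟨c', hc', hyc'⟩⟩ := ih hc
      exact ⟨⟨a', ha', by push_cast at *; omega⟩, ⟨b', hb', le_trans hxb' hxb⟩,
        ⟨c', hc', le_trans hyc' hyc⟩⟩

lemma QOp_span {S : Set Pt} {p : Pt} (hp : p ∈ QOp S) :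
    ∃ a ∈ S, p.1 + p.2 ≤ a.1 + a.2 + 1 ∧ a.1 ≤ p.1 ∧ a.2 ≤ p.2 := by
  obtain ⟨a, haS, hat⟩ := mem_QOp_iff.mp hp
  rw [mem_tile_iff] at hat
  exact ⟨a, haS, by omega⟩

lemma QOp_iter_span : ∀ (m : ℕ) {S : Set Pt} {p : Pt}, p ∈ QOp^[m] S →
    ∃ a ∈ S, p.1 + p.2 ≤ a.1 + a.2 + (m : ℤ) ∧ a.1 ≤ p.1 ∧ a.2 ≤ p.2 := by
  intro m
  induction m with
  | zero => exact fun hp => ⟨_, hp, by omega, le_refl _, le_refl _⟩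
  | succ m ih =>
      intro S p hp
      rw [Function.iterate_succ_apply'] at hp
      obtain ⟨a, ha, h1, h2, h3⟩ := QOp_span hp
      obtain ⟨a', ha', h1', h2', h3'⟩ := ih ha
      exact ⟨a', ha', by push_cast at *; omega, le_trans h2' h2, le_trans h3' h3⟩

/- ### Monotonicity and commutation -/

lemma QOp_mono {S T : Set Pt} (h : S ⊆ T) : QOp S ⊆ QOp T := by
  intro x hx
  obtain ⟨a, ha, hat⟩ := mem_QOp_iff.mp hx
  exact mem_QOp_iff.mpr ⟨a, h ha, hat⟩

lemma ROp_mono {S T : Set Pt} (h : S ⊆ T) : ROp S ⊆ ROp T := by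
  intro p hp
  have hfin : (T ∩ tile p).Finite := Set.Finite.inter_of_right (tile_finite p) T
  exact le_trans hp (Set.ncard_le_ncard (Set.inter_subset_inter_left _ h) hfin)

lemma self_subset_QOp (S : Set Pt) : S ⊆ QOp S := by
  intro a ha
  exact mem_QOp_iff.mpr ⟨a, ha, by rw [mem_tile_iff]; omega⟩

lemma QR_sub_RQ (S : Set Pt) : QOp (ROp S) ⊆ ROp (QOp S) := by
  intro p hp
  obtain ⟨r, hr, hpt⟩ := mem_QOp_iff.mp hp
  obtain ⟨a, ⟨haS, hat⟩, b, ⟨hbS, hbt⟩, hab⟩ := ROp_mem_pair hr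
  refine mem_ROp_pair (a := a + (p - r)) (b := b + (p - r))
    (mem_QOp_iff.mpr ⟨a, haS, ?_⟩) (mem_QOp_iff.mpr ⟨b, hbS, ?_⟩)
    (fun hcon => hab (by simpa using hcon)) ?_ ?_ <;>
  · rw [mem_tile_iff] at *
    simp only [Prod.fst_add, Prod.snd_add, Prod.fst_sub, Prod.snd_sub] at *
    omega

lemma QiterR (m : ℕ) (S : Set Pt) : QOp^[m] (ROp S) ⊆ ROp (QOp^[m] S) := by
  induction m with
  | zero => exact le_refl _
  | succ m ih =>
      rw [Function.iterate_succ_apply', Function.iterate_succ_apply']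
      exact le_trans (QOp_mono ih) (QR_sub_RQ _)

lemma QRiter (m : ℕ) (S : Set Pt) : QOp (ROp^[m] S) ⊆ ROp^[m] (QOp S) := by
  induction m with
  | zero => exact le_refl _
  | succ m ih =>
      rw [Function.iterate_succ_apply', Function.iterate_succ_apply']
      exact le_trans (QR_sub_RQ _) (ROp_mono ih)

lemma ROp_iter_mono (k : ℕ) {S T : Set Pt} (h : S ⊆ T) : ROp^[k] S ⊆ ROp^[k] T := by
  induction k with
  | zero => exact h
  | succ k ih => rw [Function.iterate_succ_apply', Function.iterate_succ_apply']
                 exact ROp_mono ih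

lemma QOp_iter_mono (k : ℕ) {S T : Set Pt} (h : S ⊆ T) : QOp^[k] S ⊆ QOp^[k] T := by
  induction k with
  | zero => exact h
  | succ k ih => rw [Function.iterate_succ_apply', Function.iterate_succ_apply']
                 exact QOp_mono ih

/- ### The two chains -/

lemma upper_chain (k : ℕ) (S : Set Pt) : RPlus^[k] S ⊆ ROp^[2*k] (QOp^[k] S) := by
  induction k with
  | zero => exact le_refl _
  | succ k ih =>
      rw [Function.iterate_succ_apply']
      have h1 : RPlus (RPlus^[k] S) ⊆ RPlus (ROp^[2*k] (QOp^[k] S)) := by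
        unfold RPlus
        exact QOp_mono (ROp_mono (ROp_mono ih))
      refine le_trans h1 ?_
      unfold RPlus
      have h2 : QOp (ROp (ROp (ROp^[2*k] (QOp^[k] S)))) ⊆
          ROp (ROp (ROp^[2*k] (QOp (QOp^[k] S)))) := by
        refine le_trans ?_ (ROp_mono (ROp_mono (QRiter (2*k) _)))
        refine le_trans ?_ (ROp_mono (QR_sub_RQ _))
        exact QR_sub_RQ _
      refine le_trans h2 ?_
      have e1 : 2 * (k+1) = (2*k + 1) + 1 := by ring
      rw [e1, Function.iterate_succ_apply', Function.iterate_succ_apply',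
        Function.iterate_succ_apply']

lemma lower_chain (k : ℕ) (S : Set Pt) : QOp^[k] (ROp^[2*k] S) ⊆ RPlus^[k] S := by
  induction k with
  | zero => exact le_refl _
  | succ k ih =>
      rw [Function.iterate_succ_apply' (f := RPlus)]
      have e1 : 2 * (k+1) = (2*k + 1) + 1 := by ring
      rw [Function.iterate_succ_apply' (f := QOp), e1,
        Function.iterate_succ_apply' (f := ROp), Function.iterate_succ_apply' (f := ROp)]
      -- goal: QOp (QOp^[k] (ROp (ROp (ROp^[2k] S)))) ⊆ RPlus (RPlus^[k] S)
      refine le_trans (QOp_mono (QiterR k _)) ?_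
      refine le_trans (QOp_mono (ROp_mono (QiterR k _))) ?_
      unfold RPlus
      exact QOp_mono (ROp_mono (ROp_mono ih))
/- ### Nonemptiness of R-iterates on connected sets -/

lemma R_iter_nonempty : ∀ (k : ℕ) (S : Set Pt), ConnectedIn S →
    (∃ a ∈ S, ∃ b ∈ S, ∃ c ∈ S, (k : ℤ) ≤ a.1 + a.2 - b.1 - c.2) →
    (ROp^[k] S).Nonempty := by
  intro k
  induction k with
  | zero => rintro S - ⟨a, ha, -⟩; exact ⟨a, ha⟩
  | succ k ih =>
      rintro S hConn ⟨a, ha, b, hb, c, hc, hspan⟩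
      have hnt : ∃ x ∈ S, ∃ y ∈ S, x ≠ y := by
        by_contra hcon
        push_neg at hcon
        have hab := hcon a ha b hb
        have hac := hcon a ha c hc
        rw [← hab, ← hac] at hspan
        push_cast at hspan
        omega
      have hsub : S ⊆ QOp (ROp S) := subset_QR hConn hnt
      obtain ⟨a', ha', hfa, -, -⟩ := QOp_span (hsub ha)
      obtain ⟨b', hb', -, hxb, -⟩ := QOp_span (hsub hb)
      obtain ⟨c', hc', -, -, hyc⟩ := QOp_span (hsub hc)
      have hne := ih (ROp S) (ROp_connected hConn)
        ⟨a', ha', b', hb', c', hc', by push_cast at hspan ⊢; omega⟩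
      rwa [← Function.iterate_succ_apply] at hne

/- ### The triangle inside Q-iterates -/

lemma triangle_sub (r : Pt) : ∀ (i : ℕ) (u v : ℕ), u + v ≤ i →
    r + ((u : ℤ), (v : ℤ)) ∈ QOp^[i] ({r} : Set Pt) := by
  intro i
  induction i with
  | zero =>
      intro u v huv
      have hu : u = 0 := by omega
      have hv : v = 0 := by omega
      subst hu; subst hv
      simp
  | succ i ih =>
      intro u v huv
      rw [Function.iterate_succ_apply']
      rcases Nat.lt_or_ge (u + v) (i + 1) with hlt | hge
      · exact self_subset_QOp _ (ih u v (by omega))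
      · rcases Nat.eq_zero_or_pos u with rfl | hu
        · have hm := ih 0 (v - 1) (by omega)
          refine mem_QOp_iff.mpr ⟨_, hm, ?_⟩
          rw [mem_tile_iff]
          simp only [Prod.fst_add, Prod.snd_add]
          simp
          omega
        · have hm := ih (u - 1) v (by omega)
          refine mem_QOp_iff.mpr ⟨_, hm, ?_⟩
          rw [mem_tile_iff]
          simp only [Prod.fst_add, Prod.snd_add]
          simp
          omega
/- ### Counting the triangle -/

lemma square_le (i : ℕ) :
    (i+1) * (i+1) ≤ 2 * ((Finset.range (i+1) ×ˢ Finset.range (i+1)).filter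
      (fun w => w.1 + w.2 ≤ i)).card := by
  classical
  set F := (Finset.range (i+1) ×ˢ Finset.range (i+1)).filter (fun w => w.1 + w.2 ≤ i) with hF
  have hsub : Finset.range (i+1) ×ˢ Finset.range (i+1) ⊆
      F ∪ F.image (fun w => (i - w.1, i - w.2)) := by
    intro w hw
    rw [Finset.mem_product, Finset.mem_range, Finset.mem_range] at hw
    rw [Finset.mem_union]
    by_cases hle : w.1 + w.2 ≤ i
    · left
      rw [hF, Finset.mem_filter, Finset.mem_product, Finset.mem_range, Finset.mem_range]
      exact ⟨⟨hw.1, hw.2⟩, hle⟩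
    · right
      rw [Finset.mem_image]
      refine ⟨(i - w.1, i - w.2), ?_, ?_⟩
      · rw [hF, Finset.mem_filter, Finset.mem_product, Finset.mem_range, Finset.mem_range]
        refine ⟨⟨by omega, by omega⟩, by simp; omega⟩
      · rw [Prod.ext_iff]
        constructor <;> simp <;> omega
  calc (i+1) * (i+1) = (Finset.range (i+1) ×ˢ Finset.range (i+1)).card := by
        rw [Finset.card_product, Finset.card_range]
    _ ≤ (F ∪ F.image (fun w => (i - w.1, i - w.2))).card := Finset.card_le_card hsub
    _ ≤ F.card + (F.image (fun w => (i - w.1, i - w.2))).card := Finset.card_union_le _ _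
    _ ≤ F.card + F.card := Nat.add_le_add_left (Finset.card_image_le) _
    _ = 2 * F.card := by ring

/-- Fatness lemma: if `S` is connected and `(R⁺)^{2i}(S) ≠ ∅` then
`(R⁺)^i(S)` has at least `i²/2` elements. -/
theorem fatness (S : Set Pt) (i : ℕ) (hS : ConnectedIn S)
    (h : (RPlus^[2*i] S).Nonempty) :
    ((i^2 : ℕ) : ℕ∞) ≤ 2 * (RPlus^[i] S).encard := by
  classical
  obtain ⟨r0, hr0⟩ := h
  have hr0' := upper_chain (2*i) S hr0
  obtain ⟨⟨a1, ha1, hfa1⟩, ⟨b1, hb1, hxb1⟩, ⟨c1, hc1, hyc1⟩⟩ := ROp_iter_span (2*(2*i)) hr0'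
  obtain ⟨a, ha, hfa, -, -⟩ := QOp_iter_span (2*i) ha1
  obtain ⟨b, hb, -, hxb, -⟩ := QOp_iter_span (2*i) hb1
  obtain ⟨c, hc, -, -, hyc⟩ := QOp_iter_span (2*i) hc1
  obtain ⟨r, hr⟩ := R_iter_nonempty (2*i) S hS
    ⟨a, ha, b, hb, c, hc, by push_cast at *; omega⟩
  have htri : ∀ u v : ℕ, u + v ≤ i → r + ((u : ℤ), (v : ℤ)) ∈ RPlus^[i] S := by
    intro u v huv
    apply lower_chain i S
    apply QOp_iter_mono i (Set.singleton_subset_iff.mpr hr)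
    exact triangle_sub r i u v huv
  set F := (Finset.range (i+1) ×ˢ Finset.range (i+1)).filter (fun w => w.1 + w.2 ≤ i) with hF
  set g : ℕ × ℕ → Pt := fun w => r + ((w.1 : ℤ), (w.2 : ℤ)) with hg
  have hginj : Function.Injective g := by
    intro w w' hww
    rw [hg] at hww
    simp only [add_right_inj, Prod.ext_iff] at hww
    obtain ⟨h1, h2⟩ := hww
    exact Prod.ext (by exact_mod_cast h1) (by exact_mod_cast h2)
  have hFsub : ↑(F.image g) ⊆ RPlus^[i] S := by
    intro x hx
    rw [Finset.mem_coe, Finset.mem_image] at hx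
    obtain ⟨w, hw, rfl⟩ := hx
    rw [hF, Finset.mem_filter, Finset.mem_product] at hw
    exact htri w.1 w.2 hw.2
  have hcard1 : (F.image g).card = F.card := Finset.card_image_of_injective F hginj
  have hen : (((F.image g).card : ℕ) : ℕ∞) ≤ (RPlus^[i] S).encard := by
    rw [← Set.encard_coe_eq_coe_finsetCard]
    exact Set.encard_mono hFsub
  have hnat : (i^2 : ℕ) ≤ 2 * (F.image g).card := by
    rw [hcard1]
    calc i^2 = i * i := sq i
      _ ≤ (i+1) * (i+1) := Nat.mul_le_mul (Nat.le_succ i) (Nat.le_succ i)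
      _ ≤ 2 * F.card := square_le i
  calc ((i^2 : ℕ) : ℕ∞) ≤ ((2 * (F.image g).card : ℕ) : ℕ∞) := Nat.cast_le.mpr hnat
    _ = 2 * (((F.image g).card : ℕ) : ℕ∞) := by push_cast; ring
    _ ≤ 2 * (RPlus^[i] S).encard := mul_le_mul_right hen 2
end

section
/- For every connected set S ⊆ Z^2 and every α, the thickness defined via arbitrary cuts equals the thickness defined via connected cuts with offset zero: Θ(S,α) = θ(S,α,0). -/
open Set

/-- A triangle is given by parameters `(a,b,c)`; it is
`L(a,b,c) = {(α,β) : -α ≤ a, -β ≤ b, α+β ≤ c}` with span `a+b+c`. -/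
abbrev Tri := ℝ × ℝ × ℝ

def triSpan (t : Tri) : ℝ := t.1 + t.2.1 + t.2.2

/-- The lattice point `p` lies in the deflation by `d` of the triangle `t`. -/
def inDefl (t : Tri) (d : ℝ) (p : Pt) : Prop :=
  -(p.1 : ℝ) ≤ t.1 - d ∧ -(p.2 : ℝ) ≤ t.2.1 - d ∧ (p.1 : ℝ) + (p.2 : ℝ) ≤ t.2.2 - d

/-- `span(E, d)`: the minimum total span of a finite family of (nonempty)
triangles whose `d`-deflations cover `E`. -/
noncomputable def spanD (E : Set Pt) (d : ℝ) : ℝ :=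
  sInf { s : ℝ | ∃ T : Finset Tri, (∀ t ∈ T, 0 ≤ triSpan t) ∧
    (∀ p ∈ E, ∃ t ∈ T, inDefl t d p) ∧ s = ∑ t ∈ T, triSpan t }

/-- `Span(E) = span(E, 2)`. -/
noncomputable def SpanE (E : Set Pt) : ℝ := spanD E 2

/-- `(C, A1, A2)` is a cut of `S`: disjoint subsets of `S` such that every
path in `S` from `A1` to `A2` passes through `C`. -/
def IsCut (S C A1 A2 : Set Pt) : Prop :=
  C ⊆ S ∧ A1 ⊆ S ∧ A2 ⊆ S ∧
  Disjoint C A1 ∧ Disjoint C A2 ∧ Disjoint A1 A2 ∧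
  ∀ p ∈ A1, ∀ q ∈ A2, ¬ ReachIn (S \ C) p q

/-- `bdry S A`: elements of `S \ A` adjacent to an element of `A`. -/
def bdry (S A : Set Pt) : Set Pt := {b | b ∈ S ∧ b ∉ A ∧ ∃ a ∈ A, adjG a b}

def IsClosedCut (S C A1 A2 : Set Pt) : Prop :=
  IsCut S C A1 A2 ∧ bdry S A1 ∪ bdry S A2 ⊆ C

def IsConnCut (S C A1 A2 : Set Pt) : Prop :=
  IsCut S C A1 A2 ∧ ConnectedIn (A1 ∪ C) ∧ ConnectedIn (A2 ∪ C)

/-- `θ(S, α, β)`: the smallest `k` such that `S` has a connected cut with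
cutting set of size `k` and `min_j Span(A_j ∪ C) > α k + β`; `∞` if none. -/
noncomputable def theta (S : Set Pt) (α β : ℝ) : ℕ∞ :=
  sInf { k : ℕ∞ | ∃ C A1 A2 : Set Pt, IsConnCut S C A1 A2 ∧ C.Finite ∧
    k = (C.ncard : ℕ∞) ∧
    α * (C.ncard : ℝ) + β < min (SpanE (A1 ∪ C)) (SpanE (A2 ∪ C)) }

/-- `Θ(S, α)`: as `θ` but over arbitrary (not necessarily connected) cuts. -/
noncomputable def bigTheta (S : Set Pt) (α : ℝ) : ℕ∞ :=
  sInf { k : ℕ∞ | ∃ C A1 A2 : Set Pt, IsCut S C A1 A2 ∧ C.Finite ∧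
    k = (C.ncard : ℕ∞) ∧
    α * (C.ncard : ℝ) < min (SpanE (A1 ∪ C)) (SpanE (A2 ∪ C)) }

section Basics

lemma adjG_symm {p q : Pt} (h : adjG p q) : adjG q p := by
  simp only [adjG, Set.mem_insert_iff, Set.mem_singleton_iff] at h ⊢
  have e : p - q = -(q - p) := by ring
  rcases h with h|h|h|h|h|h <;> rw [e, h] <;> decide

lemma reachIn_symm {S : Set Pt} {p q : Pt} (h : ReachIn S p q) : ReachIn S q p := by
  have hsymm : Symmetric (fun a b : Pt => a ∈ S ∧ b ∈ S ∧ adjG a b) :=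
    fun a b hab => ⟨hab.2.1, hab.1, adjG_symm hab.2.2⟩
  exact (haveI : Std.Symm (fun a b : Pt => a ∈ S ∧ b ∈ S ∧ adjG a b) := ⟨fun a b hab => hsymm hab⟩; Relation.ReflTransGen.symmetric.symm _ _ h)

lemma reachIn_mono {S T : Set Pt} (hST : S ⊆ T) {p q : Pt} (h : ReachIn S p q) :
    ReachIn T p q :=
  Relation.ReflTransGen.mono (p := fun a b => a ∈ T ∧ b ∈ T ∧ adjG a b)
    (fun a b hab => ⟨hST hab.1, hST hab.2.1, hab.2.2⟩) _ _ h

lemma reach_closed {S T : Set Pt} (hcl : ∀ a ∈ T, ∀ b ∈ S, adjG a b → b ∈ T)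
    {p q : Pt} (h : ReachIn S p q) (hp : p ∈ T) : q ∈ T := by
  induction h with
  | refl => exact hp
  | tail _ step ih => exact hcl _ ih _ step.2.1 step.2.2

lemma connectedIn_singleton (c : Pt) : ConnectedIn {c} := by
  intro p hp q hq
  rcases hp with rfl
  rcases hq with rfl
  exact Relation.ReflTransGen.refl

lemma connectedIn_insert {P : Set Pt} {b c : Pt} (hP : ConnectedIn P) (hb : b ∈ P)
    (hbc : adjG b c) : ConnectedIn (insert c P) := by
  have hstep : ReachIn (insert c P) c b :=
    Relation.ReflTransGen.single ⟨Set.mem_insert _ _, Set.mem_insert_of_mem _ hb, adjG_symm hbc⟩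
  have hmono : ∀ {x y : Pt}, ReachIn P x y → ReachIn (insert c P) x y :=
    fun h => reachIn_mono (Set.subset_insert _ _) h
  intro p hp q hq
  rcases Set.mem_insert_iff.1 hp with rfl | hp1
  · rcases Set.mem_insert_iff.1 hq with rfl | hq1
    · exact Relation.ReflTransGen.refl
    · exact hstep.trans (hmono (hP b hb q hq1))
  · rcases Set.mem_insert_iff.1 hq with rfl | hq1
    · exact (hmono (hP p hp1 b hb)).trans (reachIn_symm hstep)
    · exact hmono (hP p hp1 q hq1)

lemma reach_path {Z : Set Pt} {p q : Pt} (h : ReachIn Z p q) (hp : p ∈ Z) :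
    ∃ P : Set Pt, P ⊆ Z ∧ P.Finite ∧ p ∈ P ∧ q ∈ P ∧ ConnectedIn P := by
  induction h with
  | refl =>
    exact ⟨{p}, Set.singleton_subset_iff.2 hp, Set.finite_singleton _, rfl, rfl,
      connectedIn_singleton p⟩
  | tail _ step ih =>
    obtain ⟨P, hPZ, hPfin, hpP, hbP, hPconn⟩ := ih
    exact ⟨insert _ P, Set.insert_subset step.2.1 hPZ, hPfin.insert _,
      Set.mem_insert_of_mem _ hpP, Set.mem_insert _ _, connectedIn_insert hPconn hbP step.2.2⟩

lemma hull {Z W : Set Pt} (hZ : ConnectedIn Z) (hW : W.Finite) (hWZ : W ⊆ Z) {z0 : Pt}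
    (hz0 : z0 ∈ Z) :
    ∃ H : Set Pt, H ⊆ Z ∧ H.Finite ∧ W ⊆ H ∧ z0 ∈ H ∧ ConnectedIn H := by
  have hex : ∀ w : Pt, ∃ P : Set Pt,
      w ∈ W → (P ⊆ Z ∧ P.Finite ∧ z0 ∈ P ∧ w ∈ P ∧ ConnectedIn P) := by
    intro w
    by_cases hw : w ∈ W
    · obtain ⟨P, h⟩ := reach_path (hZ z0 hz0 w (hWZ hw)) hz0
      exact ⟨P, fun _ => h⟩
    · exact ⟨∅, fun h => absurd h hw⟩
  choose P hP using hex
  refine ⟨insert z0 (⋃ w ∈ W, P w), ?_, ?_, ?_, Set.mem_insert _ _, ?_⟩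
  · exact Set.insert_subset hz0 (Set.iUnion₂_subset fun w hw => (hP w hw).1)
  · exact Set.Finite.insert _ (hW.biUnion fun w hw => (hP w hw).2.1)
  · intro w hw
    exact Set.mem_insert_of_mem _ (Set.mem_biUnion hw (hP w hw).2.2.2.1)
  · have hsub : ∀ w ∈ W, P w ⊆ insert z0 (⋃ w ∈ W, P w) := by
      intro w hw y hy
      exact Set.mem_insert_of_mem _ (Set.mem_biUnion hw hy)
    have key : ∀ x ∈ insert z0 (⋃ w ∈ W, P w), ReachIn (insert z0 (⋃ w ∈ W, P w)) x z0 := by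
      intro x hx
      rcases Set.mem_insert_iff.1 hx with rfl | hx
      · exact Relation.ReflTransGen.refl
      · obtain ⟨w, hw, hxP⟩ := Set.mem_iUnion₂.1 hx
        exact reachIn_mono (hsub w hw) ((hP w hw).2.2.2.2 x hxP z0 (hP w hw).2.2.1)
    intro p hp q hq
    exact (key p hp).trans (reachIn_symm (key q hq))

end Basics
section Spans

def covSet (E : Set Pt) : Set ℝ :=
  { s : ℝ | ∃ T : Finset Tri, (∀ t ∈ T, 0 ≤ triSpan t) ∧
    (∀ p ∈ E, ∃ t ∈ T, inDefl t 2 p) ∧ s = ∑ t ∈ T, triSpan t }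

lemma spanE_eq (E : Set Pt) : SpanE E = sInf (covSet E) := rfl

lemma covSet_nonneg {E : Set Pt} {s : ℝ} (hs : s ∈ covSet E) : 0 ≤ s := by
  obtain ⟨T, hT0, _, rfl⟩ := hs
  exact Finset.sum_nonneg hT0

lemma covSet_bddBelow (E : Set Pt) : BddBelow (covSet E) :=
  ⟨0, fun _ hs => covSet_nonneg hs⟩

noncomputable def triFor (p : Pt) : Tri :=
  ((2 : ℝ) - (p.1 : ℝ), (2 : ℝ) - (p.2 : ℝ), (2 : ℝ) + (p.1 : ℝ) + (p.2 : ℝ))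

lemma triSpan_triFor (p : Pt) : triSpan (triFor p) = 6 := by
  simp [triSpan, triFor]; ring

lemma inDefl_triFor (p : Pt) : inDefl (triFor p) 2 p := by
  refine ⟨by simp [triFor], by simp [triFor], by simp only [triFor]; linarith⟩

lemma covSet_nonempty {E : Set Pt} (hE : E.Finite) : (covSet E).Nonempty := by
  refine ⟨∑ t ∈ hE.toFinset.image triFor, triSpan t, hE.toFinset.image triFor, ?_, ?_, rfl⟩
  · intro t ht
    obtain ⟨p, _, rfl⟩ := Finset.mem_image.1 ht
    rw [triSpan_triFor]; norm_num
  · intro p hp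
    exact ⟨triFor p, Finset.mem_image_of_mem _ (hE.mem_toFinset.2 hp), inDefl_triFor p⟩

lemma spanE_nonneg (E : Set Pt) : 0 ≤ SpanE E :=
  Real.sInf_nonneg (fun _ hs => covSet_nonneg hs)

lemma spanE_mono {E F : Set Pt} (hEF : E ⊆ F) (hF : F.Finite) : SpanE E ≤ SpanE F := by
  rw [spanE_eq, spanE_eq]
  apply csInf_le_csInf (covSet_bddBelow E) (covSet_nonempty hF)
  rintro s ⟨T, h0, hcov, rfl⟩
  exact ⟨T, h0, fun p hp => hcov p (hEF hp), rfl⟩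

lemma six_le_spanE {E : Set Pt} (hne : E.Nonempty) (hE : E.Finite) : 6 ≤ SpanE E := by
  rw [spanE_eq]
  apply le_csInf (covSet_nonempty hE)
  rintro s ⟨T, hT0, hTcov, rfl⟩
  obtain ⟨p, hp⟩ := hne
  obtain ⟨t, ht, htd⟩ := hTcov p hp
  have h6 : 6 ≤ triSpan t := by
    obtain ⟨h1, h2, h3⟩ := htd
    simp only [triSpan]
    linarith
  exact le_trans h6 (Finset.single_le_sum (fun i hi => hT0 i hi) ht)

lemma spanE_empty : SpanE (∅ : Set Pt) = 0 := by
  have h1 : SpanE (∅ : Set Pt) ≤ 0 := by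
    rw [spanE_eq]
    exact csInf_le (covSet_bddBelow _) ⟨∅, by simp, by simp, by simp⟩
  exact le_antisymm h1 (spanE_nonneg _)

lemma nonempty_of_spanE_pos {E : Set Pt} (h : 0 < SpanE E) : E.Nonempty := by
  rcases Set.eq_empty_or_nonempty E with rfl | hne
  · rw [spanE_empty] at h; exact absurd h (lt_irrefl 0)
  · exact hne

lemma defl_finite (t : Tri) : {p : Pt | inDefl t 2 p}.Finite := by
  apply Set.Finite.subset (Set.finite_Icc ((⌈2 - t.1⌉, ⌈2 - t.2.1⌉) : Pt)
    ((⌊t.2.1 + t.2.2 - 4⌋, ⌊t.1 + t.2.2 - 4⌋) : Pt))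
  rintro ⟨x, y⟩ ⟨h1, h2, h3⟩
  simp only [Set.mem_Icc, Prod.mk_le_mk]
  refine ⟨⟨?_, ?_⟩, ?_, ?_⟩
  · exact Int.ceil_le.2 (by dsimp only at h1 h2 h3 ⊢; push_cast; linarith)
  · exact Int.ceil_le.2 (by dsimp only at h1 h2 h3 ⊢; push_cast; linarith)
  · exact Int.le_floor.2 (by dsimp only at h1 h2 h3 ⊢; push_cast; linarith)
  · exact Int.le_floor.2 (by dsimp only at h1 h2 h3 ⊢; push_cast; linarith)

lemma finite_of_spanE_pos {E : Set Pt} (h : 0 < SpanE E) : E.Finite := by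
  by_contra hinf
  have hemp : covSet E = ∅ := by
    rw [Set.eq_empty_iff_forall_notMem]
    rintro s ⟨T, _, hcov, _⟩
    apply hinf
    apply Set.Finite.subset (Set.Finite.biUnion T.finite_toSet fun t _ => defl_finite t)
    intro p hp
    obtain ⟨t, ht, htd⟩ := hcov p hp
    exact Set.mem_biUnion ht htd
  rw [spanE_eq, hemp, Real.sInf_empty] at h
  exact absurd h (lt_irrefl 0)

lemma spanE_union_le {X Y : Set Pt} (hX : X.Finite) (hY : Y.Finite) :
    SpanE (X ∪ Y) ≤ SpanE X + SpanE Y := by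
  have key : ∀ s1 ∈ covSet X, ∀ s2 ∈ covSet Y, SpanE (X ∪ Y) ≤ s1 + s2 := by
    rintro s1 ⟨T1, hT1n, hT1c, rfl⟩ s2 ⟨T2, hT2n, hT2c, rfl⟩
    have hmem : (∑ t ∈ T1 ∪ T2, triSpan t) ∈ covSet (X ∪ Y) := by
      refine ⟨T1 ∪ T2, ?_, ?_, rfl⟩
      · intro t ht
        rcases Finset.mem_union.1 ht with h | h
        · exact hT1n t h
        · exact hT2n t h
      · intro p hp
        rcases hp with h | h
        · obtain ⟨t, ht, htd⟩ := hT1c p h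
          exact ⟨t, Finset.mem_union_left _ ht, htd⟩
        · obtain ⟨t, ht, htd⟩ := hT2c p h
          exact ⟨t, Finset.mem_union_right _ ht, htd⟩
    have hsum : ∑ t ∈ T1 ∪ T2, triSpan t ≤ ∑ t ∈ T1, triSpan t + ∑ t ∈ T2, triSpan t := by
      rw [← Finset.union_sdiff_self_eq_union, Finset.sum_union Finset.sdiff_disjoint.symm]
      have := Finset.sum_le_sum_of_subset_of_nonneg (Finset.sdiff_subset (s := T2) (t := T1))
        (fun i hi _ => hT2n i hi)
      linarith
    exact le_trans (csInf_le (covSet_bddBelow _) hmem) hsum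
  have h2 : ∀ s2 ∈ covSet Y, SpanE (X ∪ Y) - s2 ≤ SpanE X := by
    intro s2 hs2
    rw [spanE_eq X]
    apply le_csInf (covSet_nonempty hX)
    intro s1 hs1
    linarith [key s1 hs1 s2 hs2]
  have h3 : SpanE (X ∪ Y) - SpanE X ≤ SpanE Y := by
    rw [spanE_eq Y]
    apply le_csInf (covSet_nonempty hY)
    intro s2 hs2
    linarith [h2 s2 hs2]
  linarith

end Spans
section Cuts

/-- Reach-closure of `A` in `S \ C`. -/
def Astar (S C A : Set Pt) : Set Pt := {x | x ∈ S \ C ∧ ∃ a ∈ A, ReachIn (S \ C) a x}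

/-- The goal: a connected cut with small cutting set and large spans. -/
def GoodConc (S : Set Pt) (α : ℝ) (m : ℕ) : Prop :=
  ∃ C' A1' A2' : Set Pt, IsConnCut S C' A1' A2' ∧ C'.Finite ∧ C'.ncard ≤ m ∧
    α * (C'.ncard : ℝ) < min (SpanE (A1' ∪ C')) (SpanE (A2' ∪ C'))

lemma GoodConc.mono {S : Set Pt} {α : ℝ} {m m' : ℕ} (h : GoodConc S α m) (hmm : m ≤ m') :
    GoodConc S α m' := by
  obtain ⟨C', A1', A2', h1, h2, h3, h4⟩ := h
  exact ⟨C', A1', A2', h1, h2, h3.trans hmm, h4⟩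

/-- Key splitting step: if one side of the closed cut is disconnected, we can find a
strictly smaller cut which still has large spans on both sides. -/
lemma sub_step (S : Set Pt) (hS : ConnectedIn S) (α : ℝ) (hα : 0 < α) (n : ℕ)
    (ih : ∀ C A1 A2 F1 F2 : Set Pt, C.ncard ≤ n → IsCut S C A1 A2 → C.Finite → C.Nonempty →
      F1.Finite → F2.Finite → F1 ⊆ A1 ∪ C → F2 ⊆ A2 ∪ C →
      α * (C.ncard : ℝ) < SpanE F1 → α * (C.ncard : ℝ) < SpanE F2 → GoodConc S α C.ncard)
    (C A1s F1 F2 U V : Set Pt)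
    (hCS : C ⊆ S) (hCfin : C.Finite) (hCn : C.ncard ≤ n + 1)
    (hA1sSC : A1s ⊆ S \ C)
    (cl1 : ∀ a ∈ A1s, ∀ b ∈ S, adjG a b → b ∈ A1s ∪ C)
    (hUV : U ∪ V = A1s ∪ C)
    (hdUV : ∀ x ∈ U, x ∉ V) (hUne : U.Nonempty) (hVne : V.Nonempty)
    (hnadj : ∀ a ∈ U, ∀ b ∈ V, ¬ adjG a b)
    (hF1fin : F1.Finite) (hF2fin : F2.Finite) (hF2S : F2 ⊆ S)
    (hF1Z : F1 ⊆ A1s ∪ C)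
    (hF2U : ∀ x ∈ F2, x ∈ U → x ∈ C)
    (hspanU : α * (((C ∩ U).ncard : ℕ) : ℝ) < SpanE (F1 ∩ U))
    (hs2 : α * (C.ncard : ℝ) < SpanE F2) :
    GoodConc S α C.ncard := by
  have hZS : A1s ∪ C ⊆ S := Set.union_subset (fun x hx => (hA1sSC hx).1) hCS
  have hUZ : U ⊆ A1s ∪ C := hUV ▸ Set.subset_union_left
  have hVZ : V ⊆ A1s ∪ C := hUV ▸ Set.subset_union_right
  have hnadj2 : ∀ a ∈ V, ∀ b ∈ U, ¬ adjG a b :=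
    fun a ha b hb hadj => hnadj b hb a ha (adjG_symm hadj)
  have hCU : (C ∩ U).Nonempty := by
    by_contra hcon
    rw [Set.not_nonempty_iff_eq_empty] at hcon
    have hUA : U ⊆ A1s := by
      intro x hx
      rcases hUZ hx with h | h
      · exact h
      · exact absurd (Set.mem_inter h hx) (by rw [hcon]; exact Set.notMem_empty x)
    have hUcl : ∀ a ∈ U, ∀ b ∈ S, adjG a b → b ∈ U := by
      intro a ha b hb hadj
      have hbZ : b ∈ A1s ∪ C := cl1 a (hUA ha) b hb hadj
      rw [← hUV] at hbZ
      rcases hbZ with h | h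
      · exact h
      · exact absurd hadj (hnadj a ha b h)
    obtain ⟨u, hu⟩ := hUne
    obtain ⟨v, hv⟩ := hVne
    exact hdUV v (reach_closed hUcl (hS u (hZS (hUZ hu)) v (hZS (hVZ hv))) hu) hv
  have hCV : (C ∩ V).Nonempty := by
    by_contra hcon
    rw [Set.not_nonempty_iff_eq_empty] at hcon
    have hVA : V ⊆ A1s := by
      intro x hx
      rcases hVZ hx with h | h
      · exact h
      · exact absurd (Set.mem_inter h hx) (by rw [hcon]; exact Set.notMem_empty x)
    have hVcl : ∀ a ∈ V, ∀ b ∈ S, adjG a b → b ∈ V := by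
      intro a ha b hb hadj
      have hbZ : b ∈ A1s ∪ C := cl1 a (hVA ha) b hb hadj
      rw [← hUV] at hbZ
      rcases hbZ with h | h
      · exact absurd hadj (hnadj2 a ha b h)
      · exact h
    obtain ⟨u, hu⟩ := hUne
    obtain ⟨v, hv⟩ := hVne
    exact hdUV u hu (reach_closed hVcl (hS v (hZS (hVZ hv)) u (hZS (hUZ hu))) hv)
  -- the new, strictly smaller cut
  have hB1S : A1s ∩ U ⊆ S := fun x hx => (hA1sSC hx.1).1
  have hB1cl : ∀ a ∈ A1s ∩ U, ∀ b ∈ S \ (C ∩ U), adjG a b → b ∈ A1s ∩ U := by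
    intro a ha b hb hadj
    have hbZ : b ∈ A1s ∪ C := cl1 a ha.1 b hb.1 hadj
    have hbU : b ∈ U := by
      have hbZ' : b ∈ U ∪ V := by rw [hUV]; exact hbZ
      rcases hbZ' with h | h
      · exact h
      · exact absurd hadj (hnadj a ha.2 b h)
    rcases hbZ with h | h
    · exact ⟨h, hbU⟩
    · exact absurd (Set.mem_inter h hbU) hb.2
  have hcut1 : IsCut S (C ∩ U) (A1s ∩ U) (S \ U) := by
    refine ⟨Set.inter_subset_left.trans hCS, hB1S, Set.diff_subset, ?_, ?_, ?_, ?_⟩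
    · exact Set.disjoint_left.2 fun x hx hx' => (hA1sSC hx'.1).2 hx.1
    · exact Set.disjoint_left.2 fun x hx hx' => hx'.2 hx.2
    · exact Set.disjoint_left.2 fun x hx hx' => hx'.2 hx.2
    · intro p' hp' q' hq' hr
      exact hq'.2 (reach_closed hB1cl hr hp').2
  have hC1fin : (C ∩ U).Finite := hCfin.subset Set.inter_subset_left
  have hC1lt : (C ∩ U).ncard < C.ncard := by
    apply Set.ncard_lt_ncard _ hCfin
    rw [Set.ssubset_iff_of_subset Set.inter_subset_left]
    obtain ⟨c, hc⟩ := hCV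
    exact ⟨c, hc.1, fun h => hdUV c h.2 hc.2⟩
  have hG1 : F1 ∩ U ⊆ (A1s ∩ U) ∪ (C ∩ U) := by
    rintro x ⟨hx1, hx2⟩
    rcases hF1Z hx1 with h | h
    · exact Or.inl ⟨h, hx2⟩
    · exact Or.inr ⟨h, hx2⟩
  have hG2 : F2 ⊆ (S \ U) ∪ (C ∩ U) := by
    intro x hx
    by_cases hxU : x ∈ U
    · exact Or.inr ⟨hF2U x hx hxU, hxU⟩
    · exact Or.inl ⟨hF2S hx, hxU⟩
  have hcast : ((C ∩ U).ncard : ℝ) ≤ (C.ncard : ℝ) := by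
    exact_mod_cast Nat.cast_le.2 (Set.ncard_le_ncard Set.inter_subset_left hCfin)
  have hspan2' : α * (((C ∩ U).ncard : ℕ) : ℝ) < SpanE F2 :=
    lt_of_le_of_lt (mul_le_mul_of_nonneg_left hcast hα.le) hs2
  have := ih (C ∩ U) (A1s ∩ U) (S \ U) (F1 ∩ U) F2 (by omega) hcut1 hC1fin hCU
    (hF1fin.subset Set.inter_subset_left) hF2fin hG1 hG2 hspanU hspan2'
  exact this.mono hC1lt.le

end Cuts
section Main

lemma split_step (S : Set Pt) (hS : ConnectedIn S) (α : ℝ) (hα : 0 < α) (n : ℕ)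
    (ih : ∀ C A1 A2 F1 F2 : Set Pt, C.ncard ≤ n → IsCut S C A1 A2 → C.Finite → C.Nonempty →
      F1.Finite → F2.Finite → F1 ⊆ A1 ∪ C → F2 ⊆ A2 ∪ C →
      α * (C.ncard : ℝ) < SpanE F1 → α * (C.ncard : ℝ) < SpanE F2 → GoodConc S α C.ncard)
    (C A1 A2 F1 F2 : Set Pt) (hCn : C.ncard ≤ n + 1) (hcut : IsCut S C A1 A2)
    (hCfin : C.Finite) (hF1fin : F1.Finite) (hF2fin : F2.Finite)
    (hF1sub : F1 ⊆ A1 ∪ C) (hF2sub : F2 ⊆ A2 ∪ C)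
    (hs1 : α * (C.ncard : ℝ) < SpanE F1) (hs2 : α * (C.ncard : ℝ) < SpanE F2)
    (hdis : ¬ ConnectedIn (Astar S C A1 ∪ C)) : GoodConc S α C.ncard := by
  obtain ⟨hCS, hA1S, hA2S, hdCA1, hdCA2, hdA12, hsep⟩ := hcut
  have hA1sSC : Astar S C A1 ⊆ S \ C := fun x hx => hx.1
  have hA1A : A1 ⊆ Astar S C A1 := by
    intro a ha
    exact ⟨⟨hA1S ha, fun hc => Set.disjoint_left.mp hdCA1 hc ha⟩, a, ha,
      Relation.ReflTransGen.refl⟩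
  have cl1 : ∀ a ∈ Astar S C A1, ∀ b ∈ S, adjG a b → b ∈ Astar S C A1 ∪ C := by
    intro a ha b hb hadj
    by_cases hbC : b ∈ C
    · exact Or.inr hbC
    · obtain ⟨haSC, a0, ha0, hr⟩ := ha
      exact Or.inl ⟨⟨hb, hbC⟩, a0, ha0, hr.tail ⟨haSC, ⟨hb, hbC⟩, hadj⟩⟩
  have hA2dis : ∀ x ∈ A2, x ∉ Astar S C A1 := by
    rintro x hx ⟨_, a0, ha0, hr⟩
    exact hsep a0 ha0 x hx hr
  unfold ConnectedIn at hdis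
  push_neg at hdis
  obtain ⟨p, hp, q, hq, hnr⟩ := hdis
  have hXcl : ∀ a ∈ {x | x ∈ Astar S C A1 ∪ C ∧ ReachIn (Astar S C A1 ∪ C) p x},
      ∀ b ∈ Astar S C A1 ∪ C, adjG a b →
      b ∈ {x | x ∈ Astar S C A1 ∪ C ∧ ReachIn (Astar S C A1 ∪ C) p x} := by
    intro a ha b hb hadj
    exact ⟨hb, ha.2.tail ⟨ha.1, hb, hadj⟩⟩
  set X := {x | x ∈ Astar S C A1 ∪ C ∧ ReachIn (Astar S C A1 ∪ C) p x} with hXdef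
  set Y := (Astar S C A1 ∪ C) \ X with hYdef
  have hXZ : X ⊆ Astar S C A1 ∪ C := fun x hx => hx.1
  have hpX : p ∈ X := ⟨hp, Relation.ReflTransGen.refl⟩
  have hqY : q ∈ Y := ⟨hq, fun hx => hnr hx.2⟩
  have hnoadj : ∀ a ∈ X, ∀ b ∈ Y, ¬ adjG a b := by
    intro a ha b hb hadj
    exact hb.2 (hXcl a ha b hb.1 hadj)
  have hnoadj2 : ∀ a ∈ Y, ∀ b ∈ X, ¬ adjG a b :=
    fun a ha b hb hadj => hnoadj b hb a ha (adjG_symm hadj)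
  have hXY : X ∪ Y = Astar S C A1 ∪ C := Set.union_diff_cancel hXZ
  have hYX : Y ∪ X = Astar S C A1 ∪ C := by rw [Set.union_comm]; exact hXY
  have hdXY : ∀ x ∈ X, x ∉ Y := fun x hx hx' => hx'.2 hx
  have hdYX : ∀ x ∈ Y, x ∉ X := fun x hx => hx.2
  have hCZ : C ⊆ Astar S C A1 ∪ C := Set.subset_union_right
  have hF1Z : F1 ⊆ Astar S C A1 ∪ C := hF1sub.trans (Set.union_subset_union_left C hA1A)
  have hF2S : F2 ⊆ S := hF2sub.trans (Set.union_subset hA2S hCS)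
  have hF2U : ∀ W : Set Pt, W ⊆ Astar S C A1 ∪ C → ∀ x ∈ F2, x ∈ W → x ∈ C := by
    intro W hW x hx hxW
    rcases hF2sub hx with h | h
    · rcases hW hxW with h' | h'
      · exact absurd h' (hA2dis x h)
      · exact h'
    · exact h
  -- counting and span splitting
  have hCXfin : (C ∩ X).Finite := hCfin.subset Set.inter_subset_left
  have hCYfin : (C ∩ Y).Finite := hCfin.subset Set.inter_subset_left
  have hdCXY : Disjoint (C ∩ X) (C ∩ Y) :=
    Set.disjoint_left.2 fun x hx hx' => hdXY x hx.2 hx'.2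
  have hCun : C = (C ∩ X) ∪ (C ∩ Y) := by
    rw [← Set.inter_union_distrib_left, hXY]
    exact (Set.inter_eq_left.2 hCZ).symm
  have hCsplit : C.ncard = (C ∩ X).ncard + (C ∩ Y).ncard := by
    have h := Set.ncard_union_eq hdCXY hCXfin hCYfin
    rw [← hCun] at h
    exact h
  have hF1un : F1 = (F1 ∩ X) ∪ (F1 ∩ Y) := by
    rw [← Set.inter_union_distrib_left, hXY]
    exact (Set.inter_eq_left.2 hF1Z).symm
  have hF1split : SpanE F1 ≤ SpanE (F1 ∩ X) + SpanE (F1 ∩ Y) := by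
    have h := spanE_union_le (X := F1 ∩ X) (Y := F1 ∩ Y)
      (hF1fin.subset Set.inter_subset_left) (hF1fin.subset Set.inter_subset_left)
    rw [← hF1un] at h
    exact h
  have hor : α * (((C ∩ X).ncard : ℕ) : ℝ) < SpanE (F1 ∩ X) ∨
      α * (((C ∩ Y).ncard : ℕ) : ℝ) < SpanE (F1 ∩ Y) := by
    by_contra hcon
    push_neg at hcon
    have hle : SpanE F1 ≤ α * (C.ncard : ℝ) := by
      calc SpanE F1 ≤ SpanE (F1 ∩ X) + SpanE (F1 ∩ Y) := hF1split
        _ ≤ α * (((C ∩ X).ncard : ℕ) : ℝ) + α * (((C ∩ Y).ncard : ℕ) : ℝ) :=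
            add_le_add hcon.1 hcon.2
        _ = α * (C.ncard : ℝ) := by rw [hCsplit]; push_cast; ring
    linarith
  rcases hor with h | h
  · exact sub_step S hS α hα n ih C (Astar S C A1) F1 F2 X Y hCS hCfin hCn hA1sSC cl1 hXY
      hdXY ⟨p, hpX⟩ ⟨q, hqY⟩ hnoadj hF1fin hF2fin hF2S hF1Z (hF2U X hXZ) h hs2
  · exact sub_step S hS α hα n ih C (Astar S C A1) F1 F2 Y X hCS hCfin hCn hA1sSC cl1 hYX
      hdYX ⟨q, hqY⟩ ⟨p, hpX⟩ hnoadj2 hF1fin hF2fin hF2S hF1Z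
      (hF2U Y (fun x hx => hx.1)) h hs2

end Main
section Induction

lemma isCut_swap {S C A1 A2 : Set Pt} (h : IsCut S C A1 A2) : IsCut S C A2 A1 := by
  obtain ⟨h1, h2, h3, h4, h5, h6, h7⟩ := h
  exact ⟨h1, h3, h2, h5, h4, h6.symm, fun p hp q hq hr => h7 q hq p hp (reachIn_symm hr)⟩

lemma subset_astar {S C A : Set Pt} (hAS : A ⊆ S) (hd : Disjoint C A) : A ⊆ Astar S C A :=
  fun a ha => ⟨⟨hAS ha, fun hc => Set.disjoint_left.mp hd hc ha⟩, a, ha,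
    Relation.ReflTransGen.refl⟩

lemma astar_sep {S C A1 A2 : Set Pt} (hsep : ∀ p ∈ A1, ∀ q ∈ A2, ¬ ReachIn (S \ C) p q) :
    ∀ p ∈ Astar S C A1, ∀ q ∈ Astar S C A2, ¬ ReachIn (S \ C) p q := by
  rintro p ⟨_, a1, ha1, r1⟩ q ⟨_, a2, ha2, r2⟩ hr
  exact hsep a1 ha1 a2 ha2 ((r1.trans hr).trans (reachIn_symm r2))

lemma exists_conn_cut (S : Set Pt) (hS : ConnectedIn S) (α : ℝ) (hα : 0 < α) :
    ∀ n : ℕ, ∀ C A1 A2 F1 F2 : Set Pt, C.ncard ≤ n → IsCut S C A1 A2 → C.Finite →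
      C.Nonempty → F1.Finite → F2.Finite → F1 ⊆ A1 ∪ C → F2 ⊆ A2 ∪ C →
      α * (C.ncard : ℝ) < SpanE F1 → α * (C.ncard : ℝ) < SpanE F2 →
      GoodConc S α C.ncard := by
  intro n
  induction n with
  | zero =>
    intro C A1 A2 F1 F2 hCn _ hCfin hCne _ _ _ _ _ _
    have := (Set.ncard_pos hCfin).2 hCne
    omega
  | succ n ih =>
    intro C A1 A2 F1 F2 hCn hcut hCfin hCne hF1fin hF2fin hF1sub hF2sub hs1 hs2
    by_cases h1 : ConnectedIn (Astar S C A1 ∪ C)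
    · by_cases h2 : ConnectedIn (Astar S C A2 ∪ C)
      · -- both sides connected: build the connected cut directly
        obtain ⟨c0, hc0⟩ := hCne
        obtain ⟨hCS, hA1S, hA2S, hdCA1, hdCA2, hdA12, hsep⟩ := hcut
        have hA1A : A1 ⊆ Astar S C A1 := subset_astar hA1S hdCA1
        have hA2A : A2 ⊆ Astar S C A2 := subset_astar hA2S hdCA2
        have hZ1 : F1 ∪ C ⊆ Astar S C A1 ∪ C :=
          Set.union_subset (hF1sub.trans (Set.union_subset_union_left C hA1A))
            Set.subset_union_right
        have hZ2 : F2 ∪ C ⊆ Astar S C A2 ∪ C :=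
          Set.union_subset (hF2sub.trans (Set.union_subset_union_left C hA2A))
            Set.subset_union_right
        obtain ⟨H1, hH1Z, hH1fin, hWH1, _, hH1conn⟩ :=
          hull h1 (hF1fin.union hCfin) hZ1 (z0 := c0) (Or.inr hc0)
        obtain ⟨H2, hH2Z, hH2fin, hWH2, _, hH2conn⟩ :=
          hull h2 (hF2fin.union hCfin) hZ2 (z0 := c0) (Or.inr hc0)
        have hCH1 : C ⊆ H1 := (Set.subset_union_right (s := F1)).trans hWH1
        have hCH2 : C ⊆ H2 := (Set.subset_union_right (s := F2)).trans hWH2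
        have hH1A : H1 \ C ⊆ Astar S C A1 := fun x hx => (hH1Z hx.1).resolve_right hx.2
        have hH2A : H2 \ C ⊆ Astar S C A2 := fun x hx => (hH2Z hx.1).resolve_right hx.2
        have e1 : (H1 \ C) ∪ C = H1 := by
          rw [Set.diff_union_self]
          exact Set.union_eq_self_of_subset_right hCH1
        have e2 : (H2 \ C) ∪ C = H2 := by
          rw [Set.diff_union_self]
          exact Set.union_eq_self_of_subset_right hCH2
        have hsep' := astar_sep (S := S) (C := C) hsep
        refine ⟨C, H1 \ C, H2 \ C,
          ⟨⟨hCS, hH1A.trans (fun x hx => hx.1.1), hH2A.trans (fun x hx => hx.1.1),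
            Set.disjoint_left.2 fun x hx hx' => hx'.2 hx,
            Set.disjoint_left.2 fun x hx hx' => hx'.2 hx,
            Set.disjoint_left.2 fun x hx hx' =>
              hsep' x (hH1A hx) x (hH2A hx') Relation.ReflTransGen.refl,
            fun p hp q hq => hsep' p (hH1A hp) q (hH2A hq)⟩,
           by rw [e1]; exact hH1conn, by rw [e2]; exact hH2conn⟩,
          hCfin, le_rfl, ?_⟩
        rw [e1, e2]
        refine lt_min (lt_of_lt_of_le hs1 ?_) (lt_of_lt_of_le hs2 ?_)
        · exact spanE_mono ((Set.subset_union_left (t := C)).trans hWH1) hH1fin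
        · exact spanE_mono ((Set.subset_union_left (t := C)).trans hWH2) hH2fin
      · exact split_step S hS α hα n ih C A2 A1 F2 F1 hCn (isCut_swap hcut) hCfin
          hF2fin hF1fin hF2sub hF1sub hs2 hs1 h2
    · exact split_step S hS α hα n ih C A1 A2 F1 F2 hCn hcut hCfin
        hF1fin hF2fin hF1sub hF2sub hs1 hs2 h1

end Induction
/-- For connected `S`, the thickness via arbitrary cuts equals the thickness
via connected cuts with offset zero: `Θ(S,α) = θ(S,α,0)`. -/
theorem bigTheta_eq_theta (S : Set Pt) (α : ℝ) (hS : ConnectedIn S) :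
    bigTheta S α = theta S α 0 := by
  apply le_antisymm
  · unfold bigTheta theta
    apply sInf_le_sInf
    rintro k ⟨C, A1, A2, hconn, hfin, hk, hlt⟩
    refine ⟨C, A1, A2, hconn.1, hfin, hk, ?_⟩
    rw [add_zero] at hlt
    exact hlt
  · unfold bigTheta
    apply le_sInf
    rintro k ⟨C, A1, A2, hcut, hCfin, rfl, hlt⟩
    have hCne : C.Nonempty := by
      rcases Set.eq_empty_or_nonempty C with rfl | h
      · exfalso
        simp only [Set.ncard_empty, Nat.cast_zero, mul_zero, Set.union_empty] at hlt
        have h1 : A1.Nonempty := nonempty_of_spanE_pos (lt_of_lt_of_le hlt (min_le_left _ _))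
        have h2 : A2.Nonempty := nonempty_of_spanE_pos (lt_of_lt_of_le hlt (min_le_right _ _))
        obtain ⟨a1, ha1⟩ := h1
        obtain ⟨a2, ha2⟩ := h2
        apply hcut.2.2.2.2.2.2 a1 ha1 a2 ha2
        rw [Set.diff_empty]
        exact hS a1 (hcut.2.1 ha1) a2 (hcut.2.2.1 ha2)
      · exact h
    have hC1 : 1 ≤ C.ncard := (Set.ncard_pos hCfin).2 hCne
    rcases le_or_gt α 0 with hα | hα
    · -- α ≤ 0 : a singleton connected cut suffices
      obtain ⟨c, hc⟩ := hCne
      have hth : ((({c} : Set Pt).ncard : ℕ∞)) ∈ { k : ℕ∞ | ∃ C A1 A2 : Set Pt,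
          IsConnCut S C A1 A2 ∧ C.Finite ∧ k = (C.ncard : ℕ∞) ∧
          α * (C.ncard : ℝ) + 0 < min (SpanE (A1 ∪ C)) (SpanE (A2 ∪ C)) } := by
        refine ⟨{c}, ∅, ∅, ⟨⟨Set.singleton_subset_iff.2 (hcut.1 hc), Set.empty_subset _,
          Set.empty_subset _, by simp, by simp, by simp,
          fun p hp => absurd hp (Set.notMem_empty p)⟩,
          by rw [Set.empty_union]; exact connectedIn_singleton c,
          by rw [Set.empty_union]; exact connectedIn_singleton c⟩,
          Set.finite_singleton c, rfl, ?_⟩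
        rw [Set.empty_union, Set.ncard_singleton, min_self]
        have h6 := six_le_spanE (E := {c}) (Set.singleton_nonempty c) (Set.finite_singleton c)
        push_cast
        linarith
      calc theta S α 0 ≤ _ := sInf_le hth
        _ ≤ (C.ncard : ℕ∞) := by
          rw [Set.ncard_singleton]
          exact_mod_cast hC1
    · -- α > 0 : the main construction
      have hmul0 : (0 : ℝ) ≤ α * (C.ncard : ℝ) := by positivity
      have hmin0 : 0 < min (SpanE (A1 ∪ C)) (SpanE (A2 ∪ C)) := lt_of_le_of_lt hmul0 hlt
      have h1fin : (A1 ∪ C).Finite :=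
        finite_of_spanE_pos (lt_of_lt_of_le hmin0 (min_le_left _ _))
      have h2fin : (A2 ∪ C).Finite :=
        finite_of_spanE_pos (lt_of_lt_of_le hmin0 (min_le_right _ _))
      obtain ⟨C', A1', A2', hconn', hC'fin, hC'le, hlt'⟩ :=
        exists_conn_cut S hS α hα C.ncard C A1 A2 (A1 ∪ C) (A2 ∪ C) le_rfl hcut hCfin hCne
          h1fin h2fin subset_rfl subset_rfl
          (lt_of_lt_of_le hlt (min_le_left _ _)) (lt_of_lt_of_le hlt (min_le_right _ _))
      have hth : ((C'.ncard : ℕ∞)) ∈ { k : ℕ∞ | ∃ C A1 A2 : Set Pt,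
          IsConnCut S C A1 A2 ∧ C.Finite ∧ k = (C.ncard : ℕ∞) ∧
          α * (C.ncard : ℝ) + 0 < min (SpanE (A1 ∪ C)) (SpanE (A2 ∪ C)) } :=
        ⟨C', A1', A2', hconn', hC'fin, rfl, by rw [add_zero]; exact hlt'⟩
      exact le_trans (sInf_le hth) (by exact_mod_cast hC'le)
end
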